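/- For N = 2^n with n ≥ 1, the total wire density S(i,N) at cut position i equals the number of hypercube edges {a,b} with a < i ≤ b, where edges join numbers in 0..N-1 differing in exactly one binary bit. -/

import Mathlib

/-- Number of dimension-`k` links crossing intercolumn position `i`
(least nonnegative residue mod `2^k`). -/
def f (i : ℤ) (k : ℕ) : ℤ := (i * (1 - 2 * (((i - 1) / 2 ^ (k - 1)) % 2))) % 2 ^ k

/-- Total wire density at intercolumn position `i` for `N = 2^n`. -/
def S (i : ℤ) (n : ℕ) : ℤ := ∑ k ∈ Finset.Icc 1 n, f i k

/-- The `j`-th binary digit of `i`, counting from 1 at the right. -/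
def b (i : ℤ) (j : ℕ) : ℤ := (i / 2 ^ (j - 1)) % 2

/-- Excess of 1's over 0's among bit positions `j+1, ..., n` of `i`. -/
def e (i : ℤ) (j n : ℕ) : ℤ := ∑ l ∈ Finset.Icc (j + 1) n, (2 * b i l - 1)

/-- Maximum wire density `m(N)` for `N = 2^n`. -/
def m (n : ℕ) : ℤ := (4 * 2 ^ n - (-1) ^ n - 3) / 6

/-- Leftmost maximizing position `p(N)` for `N = 2^n`. -/
def p (n : ℕ) : ℤ := (2 ^ n - (-1) ^ n) / 3

/-! ### Auxiliary integer lemmas -/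

private lemma emod_val' (b q t : ℤ) (h0 : 0 ≤ t) (h1 : t < b) : (b * q + t) % b = t := by
  rw [show b * q + t = t + b * q by ring, Int.add_mul_emod_self_left,
    Int.emod_eq_of_lt h0 h1]

private lemma ediv_val' (b q t : ℤ) (h0 : 0 ≤ t) (h1 : t < b) : (b * q + t) / b = q := by
  rw [show b * q + t = t + q * b by ring,
    Int.add_mul_ediv_right _ _ (by omega : b ≠ 0),
    Int.ediv_eq_zero_of_lt h0 h1, zero_add]

private lemma key1 (M x : ℤ) (hM : 0 < M) :
    (x * (1 - 2 * (((x - 1) / M) % 2))) % (2 * M)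
      = min (x % (2 * M)) (2 * M - x % (2 * M)) := by
  have h2M : (0:ℤ) < 2 * M := by linarith
  set s := (x - 1) / (2 * M) with hs
  set r := (x - 1) % (2 * M) with hr
  have h1 : 2 * M * s + r = x - 1 := Int.mul_ediv_add_emod _ _
  have hr0 : 0 ≤ r := Int.emod_nonneg _ (by positivity)
  have hr2 : r < 2 * M := Int.emod_lt_of_pos _ h2M
  rcases Int.lt_or_le r M with h | h
  · have hq : ((x - 1) / M) % 2 = 0 := by
      rw [show x - 1 = M * (2 * s) + r by linear_combination -h1, ediv_val' _ _ _ hr0 h]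
      omega
    have hx2 : x % (2 * M) = r + 1 := by
      rw [show x = 2 * M * s + (r + 1) by linear_combination -h1,
        emod_val' _ _ _ (by omega) (by omega)]
    rw [hq, hx2]
    simp only [mul_zero, sub_zero, mul_one]
    rw [hx2]
    omega
  · have hq : ((x - 1) / M) % 2 = 1 := by
      rw [show x - 1 = M * (2 * s + 1) + (r - M) by linear_combination -h1,
        ediv_val' _ _ _ (by omega) (by omega)]
      omega
    have hneg : (x * (1 - 2 * 1)) % (2 * M) = 2 * M - (r + 1) := by
      rw [show x * (1 - 2 * 1) = 2 * M * (-s - 1) + (2 * M - (r + 1)) by linear_combination h1,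
        emod_val' _ _ _ (by omega) (by omega)]
    have hx2 : x % (2 * M) = (r + 1) % (2 * M) := by
      rw [show x = 2 * M * s + (r + 1) by linear_combination -h1,
        show 2 * M * s + (r + 1) = (r + 1) + 2 * M * s by ring,
        Int.add_mul_emod_self_left]
    rcases eq_or_lt_of_le (show r + 1 ≤ 2 * M by omega) with he | hlt
    · have hz : x % (2 * M) = 0 := by rw [hx2, he]; simp
      rw [hq, hneg, hz]
      omega
    · have hz : x % (2 * M) = r + 1 := by rw [hx2, Int.emod_eq_of_lt (by omega) hlt]
      rw [hq, hneg, hz]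
      omega

private lemma key2 (M x : ℤ) (hM : 0 < M) :
    min ((x + 1) % (2 * M)) (2 * M - (x + 1) % (2 * M))
      - min (x % (2 * M)) (2 * M - x % (2 * M)) = 1 - 2 * ((x / M) % 2) := by
  have h2M : (0:ℤ) < 2 * M := by linarith
  set s := x / (2 * M) with hs
  set r := x % (2 * M) with hr
  have h1 : 2 * M * s + r = x := Int.mul_ediv_add_emod _ _
  have hr0 : 0 ≤ r := Int.emod_nonneg _ (by positivity)
  have hr2 : r < 2 * M := Int.emod_lt_of_pos _ h2M
  rcases Int.lt_or_le r M with h | h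
  · have hq : (x / M) % 2 = 0 := by
      rw [show x = M * (2 * s) + r by linear_combination -h1, ediv_val' _ _ _ hr0 h]; omega
    have hx1 : (x + 1) % (2 * M) = r + 1 := by
      rw [show x + 1 = 2 * M * s + (r + 1) by linear_combination -h1,
        emod_val' _ _ _ (by omega) (by omega)]
    rw [hq, hx1]
    omega
  · have hq : (x / M) % 2 = 1 := by
      rw [show x = M * (2 * s + 1) + (r - M) by linear_combination -h1,
        ediv_val' _ _ _ (by omega) (by omega)]
      omega
    rcases eq_or_lt_of_le (show r + 1 ≤ 2 * M by omega) with he | hlt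
    · have hx1 : (x + 1) % (2 * M) = 0 := by
        rw [show x + 1 = 2 * M * (s + 1) + 0 by linear_combination -h1 + he,
          emod_val' _ _ _ le_rfl h2M]
      rw [hq, hx1]
      omega
    · have hx1 : (x + 1) % (2 * M) = r + 1 := by
        rw [show x + 1 = 2 * M * s + (r + 1) by linear_combination -h1,
          emod_val' _ _ _ (by omega) (by omega)]
      rw [hq, hx1]
      omega

private lemma f_eq (i : ℤ) {k : ℕ} (hk : 1 ≤ k) :
    f i k = min (i % 2 ^ k) (2 ^ k - i % 2 ^ k) := by
  obtain ⟨d, rfl⟩ : ∃ d, k = d + 1 := ⟨k - 1, by omega⟩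
  have h2 : (2:ℤ) ^ (d + 1) = 2 * 2 ^ d := by ring
  unfold f
  simp only [Nat.add_sub_cancel, h2]
  exact key1 _ _ (by positivity)

private lemma f_step (i : ℤ) {k : ℕ} (hk : 1 ≤ k) :
    f (i + 1) k - f i k = 1 - 2 * ((i / 2 ^ (k - 1)) % 2) := by
  rw [f_eq _ hk, f_eq _ hk]
  obtain ⟨d, rfl⟩ : ∃ d, k = d + 1 := ⟨k - 1, by omega⟩
  have h2 : (2:ℤ) ^ (d + 1) = 2 * 2 ^ d := by ring
  simp only [Nat.add_sub_cancel, h2]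
  exact key2 _ _ (by positivity)

/-! ### Bit manipulation lemmas -/

private lemma bits_eq {x y d e : ℕ} (h : x ^^^ y = 2 ^ d) (hne : e ≠ d) :
    x.testBit e = y.testBit e := by
  have := congrArg (fun z => z.testBit e) h
  simp only [Nat.testBit_xor, Nat.testBit_two_pow_of_ne (Ne.symm hne)] at this
  rcases hx : x.testBit e <;> rcases hy : y.testBit e <;> simp [hx, hy] at this ⊢

private lemma bits_ne {x y d : ℕ} (h : x ^^^ y = 2 ^ d) : x.testBit d = ! y.testBit d := by
  have := congrArg (fun z => z.testBit d) h
  simp only [Nat.testBit_xor, Nat.testBit_two_pow_self] at this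
  rcases hx : x.testBit d <;> rcases hy : y.testBit d <;> simp [hx, hy] at this ⊢

private lemma xor_lt_iff' {x y d : ℕ} (h : x ^^^ y = 2 ^ d) : x < y ↔ x.testBit d = false := by
  constructor
  · intro hlt
    by_contra hc
    have hx : x.testBit d = true := by rcases hxx : x.testBit d <;> simp_all
    have hy : y.testBit d = false := by
      have hb := bits_ne h; rw [hx] at hb; rcases hyy : y.testBit d <;> simp [hyy] at hb ⊢
    have : y < x := Nat.lt_of_testBit d hy hx (fun j hj => (bits_eq h (by omega)).symm)
    omega
  · intro hx
    have hy : y.testBit d = true := by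
      have hb := bits_ne h; rw [hx] at hb; rcases hyy : y.testBit d <;> simp [hyy] at hb ⊢
    exact Nat.lt_of_testBit d hx hy (fun j hj => bits_eq h (by omega))

private lemma xor_pow_eq {j c k : ℕ} (h : j ^^^ c = 2 ^ k) : c = j ^^^ 2 ^ k := by
  rw [← h, Nat.xor_xor_cancel_left]

/-! ### The crossing-edge set -/

open scoped Classical in
private noncomputable def Fset (n : ℕ) (i : ℤ) : Finset (ℕ × ℕ) :=
  (Finset.range (2 ^ n) ×ˢ Finset.range (2 ^ n)).filter
    (fun ab => (ab.1 : ℤ) < i ∧ i ≤ (ab.2 : ℤ) ∧ ab.1 < ab.2 ∧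
      ∃ k : ℕ, ab.1 ^^^ ab.2 = 2 ^ k)

private lemma mem_Fset {n : ℕ} {i : ℤ} {a c : ℕ} :
    (a, c) ∈ Fset n i ↔ a < 2 ^ n ∧ c < 2 ^ n ∧ (a : ℤ) < i ∧ i ≤ (c : ℤ) ∧ a < c ∧
      ∃ k : ℕ, a ^^^ c = 2 ^ k := by
  classical
  simp [Fset, Finset.mem_filter, Finset.mem_product, and_assoc]

private lemma up_eq (n j : ℕ) (hj : j < 2 ^ n) :
    Fset n ((j : ℤ) + 1) \ Fset n (j : ℤ)
      = ((Finset.range n).filter (fun d => j.testBit d = false)).image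
          (fun d => (j, j ^^^ 2 ^ d)) := by
  ext ⟨a, c⟩
  simp only [Finset.mem_sdiff, mem_Fset, Finset.mem_image, Finset.mem_filter, Finset.mem_range]
  constructor
  · rintro ⟨⟨ha, hc, h1, h2, h3, k, hk⟩, hnot⟩
    have haj : a = j := by
      by_contra hne
      exact hnot ⟨ha, hc, by omega, by omega, h3, k, hk⟩
    subst haj
    have hkn : k < n := by
      have h2k : 2 ^ k < 2 ^ n := hk ▸ Nat.xor_lt_two_pow ha hc
      exact (Nat.pow_lt_pow_iff_right one_lt_two).mp h2k
    exact ⟨k, ⟨hkn, (xor_lt_iff' hk).mp h3⟩, by rw [← xor_pow_eq hk]⟩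
  · rintro ⟨d, ⟨hdn, hdb⟩, heq⟩
    rw [Prod.ext_iff] at heq
    obtain ⟨h5, h6⟩ := heq
    simp only at h5 h6
    subst h5; subst h6
    have hxor : j ^^^ (j ^^^ 2 ^ d) = 2 ^ d := Nat.xor_xor_cancel_left _ _
    have hlt : j < j ^^^ 2 ^ d := (xor_lt_iff' hxor).mpr hdb
    have hcn : j ^^^ 2 ^ d < 2 ^ n :=
      Nat.xor_lt_two_pow hj (Nat.pow_lt_pow_right one_lt_two hdn)
    refine ⟨⟨hj, hcn, by omega, by omega, hlt, d, hxor⟩, ?_⟩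
    rintro ⟨-, -, hbad, -⟩
    omega
  
private lemma down_eq (n j : ℕ) (hj : j < 2 ^ n) :
    Fset n (j : ℤ) \ Fset n ((j : ℤ) + 1)
      = ((Finset.range n).filter (fun d => j.testBit d = true)).image
          (fun d => (j ^^^ 2 ^ d, j)) := by
  ext ⟨a, c⟩
  simp only [Finset.mem_sdiff, mem_Fset, Finset.mem_image, Finset.mem_filter, Finset.mem_range]
  constructor
  · rintro ⟨⟨ha, hc, h1, h2, h3, k, hk⟩, hnot⟩
    have hcj : c = j := by
      by_contra hne
      exact hnot ⟨ha, hc, by omega, by omega, h3, k, hk⟩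
    subst hcj
    have hkn : k < n := by
      have h2k : 2 ^ k < 2 ^ n := hk ▸ Nat.xor_lt_two_pow ha hc
      exact (Nat.pow_lt_pow_iff_right one_lt_two).mp h2k
    have hta : a.testBit k = false := (xor_lt_iff' hk).mp h3
    have htj : c.testBit k = true := by
      have hb := bits_ne hk; rw [hta] at hb
      rcases hyy : c.testBit k <;> simp [hyy] at hb ⊢
    refine ⟨k, ⟨hkn, htj⟩, ?_⟩
    have haj : a = c ^^^ 2 ^ k := by
      rw [← hk, Nat.xor_comm a c, Nat.xor_xor_cancel_left]
    rw [← haj]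
  · rintro ⟨d, ⟨hdn, hdb⟩, heq⟩
    rw [Prod.ext_iff] at heq
    obtain ⟨h5, h6⟩ := heq
    simp only at h5 h6
    subst h5; subst h6
    have hxor : j ^^^ (j ^^^ 2 ^ d) = 2 ^ d := Nat.xor_xor_cancel_left _ _
    have hxor' : (j ^^^ 2 ^ d) ^^^ j = 2 ^ d := by rw [Nat.xor_comm, hxor]
    have hat : (j ^^^ 2 ^ d).testBit d = false := by
      have hb := bits_ne hxor'
      rw [hdb] at hb
      simpa using hb
    have hlt : j ^^^ 2 ^ d < j := (xor_lt_iff' hxor').mpr hat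
    have hcn : j ^^^ 2 ^ d < 2 ^ n :=
      Nat.xor_lt_two_pow hj (Nat.pow_lt_pow_right one_lt_two hdn)
    refine ⟨⟨hcn, hj, by omega, by omega, hlt, d, hxor'⟩, ?_⟩
    rintro ⟨-, -, -, hbad, -⟩
    omega

private lemma bit_int (j d : ℕ) :
    ((j : ℤ) / 2 ^ d) % 2 = if j.testBit d then 1 else 0 := by
  have hcast : ((j : ℤ) / 2 ^ d) % 2 = ((j / 2 ^ d % 2 : ℕ) : ℤ) := by push_cast; ring
  rw [hcast, Nat.testBit_eq_decide_div_mod_eq]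
  by_cases h : j / 2 ^ d % 2 = 1
  · simp [h]
  · have h0 : j / 2 ^ d % 2 = 0 := by omega
    simp [h, h0]

private lemma card_aux (n j : ℕ) (hj : j ≤ 2 ^ n) :
    S (j : ℤ) n = ((Fset n (j : ℤ)).card : ℤ) := by
  induction j with
  | zero =>
    have h0 : Fset n ((0 : ℕ) : ℤ) = ∅ := by
      ext ⟨a, c⟩
      simp only [mem_Fset, Finset.notMem_empty, iff_false]
      rintro ⟨-, -, hbad, -⟩
      omega
    rw [h0]
    simp [S, f]
  | succ j ih =>
    have hj' : j < 2 ^ n := by omega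
    specialize ih (by omega)
    have hstep : S ((j : ℤ) + 1) n - S (j : ℤ) n
        = ∑ d ∈ Finset.range n, (1 - 2 * (((j : ℤ) / 2 ^ d) % 2)) := by
      rw [S, S, ← Finset.sum_sub_distrib]
      have h1 : ∀ k ∈ Finset.Icc 1 n,
          f ((j : ℤ) + 1) k - f (j : ℤ) k = 1 - 2 * (((j : ℤ) / 2 ^ (k - 1)) % 2) :=
        fun k hk => f_step _ (Finset.mem_Icc.mp hk).1
      rw [Finset.sum_congr rfl h1]
      exact Finset.sum_nbij' (i := fun k => k - 1) (j := fun d => d + 1)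
        (by intro k hk; simp only [Finset.mem_Icc] at hk; simp only [Finset.mem_range]; omega)
        (by intro d hd; simp only [Finset.mem_range] at hd; simp only [Finset.mem_Icc]; omega)
        (by intro k hk; simp only [Finset.mem_Icc] at hk; show k - 1 + 1 = k; omega)
        (by intro d _; show d + 1 - 1 = d; omega)
        (by intro k _; rfl)
    have hbit : ∑ d ∈ Finset.range n, (1 - 2 * (((j : ℤ) / 2 ^ d) % 2))
        = (((Finset.range n).filter (fun d => j.testBit d = false)).card : ℤ)
          - (((Finset.range n).filter (fun d => j.testBit d = true)).card : ℤ) := by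
      have h2 : ∀ d ∈ Finset.range n, (1 - 2 * (((j : ℤ) / 2 ^ d) % 2))
          = (if j.testBit d = true then (-1 : ℤ) else 1) := by
        intro d _
        rw [bit_int]
        rcases h : j.testBit d <;> simp [h]
      rw [Finset.sum_congr rfl h2, Finset.sum_ite, Finset.sum_const, Finset.sum_const]
      have h3 : (Finset.range n).filter (fun d => ¬ j.testBit d = true)
          = (Finset.range n).filter (fun d => j.testBit d = false) := by
        apply Finset.filter_congr
        intro x _
        simp
      rw [h3]
      push_cast
      ring
    have hup : (Fset n ((j : ℤ) + 1) \ Fset n (j : ℤ)).card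
        = ((Finset.range n).filter (fun d => j.testBit d = false)).card := by
      rw [up_eq n j hj']
      apply Finset.card_image_of_injective
      intro d1 d2 h
      have h2 : j ^^^ 2 ^ d1 = j ^^^ 2 ^ d2 := congrArg Prod.snd h
      have h3 : (2 : ℕ) ^ d1 = 2 ^ d2 := by
        calc (2 : ℕ) ^ d1 = j ^^^ (j ^^^ 2 ^ d1) := (Nat.xor_xor_cancel_left _ _).symm
          _ = j ^^^ (j ^^^ 2 ^ d2) := by rw [h2]
          _ = 2 ^ d2 := Nat.xor_xor_cancel_left _ _
      exact Nat.pow_right_injective le_rfl h3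
    have hdown : (Fset n (j : ℤ) \ Fset n ((j : ℤ) + 1)).card
        = ((Finset.range n).filter (fun d => j.testBit d = true)).card := by
      rw [down_eq n j hj']
      apply Finset.card_image_of_injective
      intro d1 d2 h
      have h2 : j ^^^ 2 ^ d1 = j ^^^ 2 ^ d2 := congrArg Prod.fst h
      have h3 : (2 : ℕ) ^ d1 = 2 ^ d2 := by
        calc (2 : ℕ) ^ d1 = j ^^^ (j ^^^ 2 ^ d1) := (Nat.xor_xor_cancel_left _ _).symm
          _ = j ^^^ (j ^^^ 2 ^ d2) := by rw [h2]
          _ = 2 ^ d2 := Nat.xor_xor_cancel_left _ _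
      exact Nat.pow_right_injective le_rfl h3
    have e1 := Finset.card_inter_add_card_sdiff (Fset n ((j : ℤ) + 1)) (Fset n (j : ℤ))
    have e2 := Finset.card_inter_add_card_sdiff (Fset n (j : ℤ)) (Fset n ((j : ℤ) + 1))
    have e3 : Fset n ((j : ℤ) + 1) ∩ Fset n (j : ℤ)
        = Fset n (j : ℤ) ∩ Fset n ((j : ℤ) + 1) := Finset.inter_comm _ _
    rw [e3] at e1
    rw [hbit] at hstep
    have hcast : ((j + 1 : ℕ) : ℤ) = (j : ℤ) + 1 := by push_cast; ring
    rw [hcast]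
    omega

open scoped Classical in
theorem S_counts_crossing_edges (n : ℕ) (hn : 1 ≤ n) (i : ℤ) (hi0 : 0 ≤ i) (hiN : i ≤ 2 ^ n) :
    S i n = ((Finset.range (2 ^ n) ×ˢ Finset.range (2 ^ n)).filter
      (fun ab => (ab.1 : ℤ) < i ∧ i ≤ (ab.2 : ℤ) ∧ ab.1 < ab.2 ∧
        ∃ k : ℕ, ab.1 ^^^ ab.2 = 2 ^ k)).card := by
  obtain ⟨j, rfl⟩ := Int.eq_ofNat_of_zero_le hi0
  have hj : j ≤ 2 ^ n := by exact_mod_cast hiN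
  rw [card_aux n j hj]
  rfl
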